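/- For every integer n ≥ 0 and every r ∈ (0,1), the derivative of the Bessel function J_{n+1} satisfies 0 < r^n/(2^{n+2} n!) ≤ J_{n+1}'(r) ≤ r^n/(2^{n+1} n!). -/

import Mathlib

set_option maxHeartbeats 1000000
open Real Set MeasureTheory intervalIntegral


open Real Set

/-- Bessel function of the first kind of integer order, via the Poisson integral
representation. -/
noncomputable def besselJ (n : ℕ) (r : ℝ) : ℝ :=
  r ^ n / (2 ^ n * Real.Gamma ((n : ℝ) + 1 / 2) * Real.sqrt Real.pi) *
    ∫ t in (-1 : ℝ)..1, Real.cos (r * t) * (1 - t ^ 2) ^ ((n : ℝ) - 1 / 2)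

lemma contW {p : ℝ} (hp : (0:ℝ) < p) : Continuous (fun t : ℝ => (1 - t ^ 2) ^ p) := by
  have h : Continuous fun x : ℝ => x ^ p := by
    rw [continuous_iff_continuousAt]
    intro x
    exact Real.continuousAt_rpow_const x p (Or.inr hp.le)
  exact h.comp (by continuity)

lemma Mval {p : ℝ} (hp : (1:ℝ)/2 ≤ p) :
    ∫ t in (-1:ℝ)..1, t ^ 2 * (1 - t ^ 2) ^ p
      = (1 / (2 * p + 2)) * ∫ t in (-1:ℝ)..1, (1 - t ^ 2) ^ (p + 1) := by
  have hp0 : (0:ℝ) < p := by linarith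
  have hp1 : (0:ℝ) < p + 1 := by linarith
  have hne : (2:ℝ) * p + 2 ≠ 0 := by linarith
  set v : ℝ → ℝ := fun t => -(1 / (2 * p + 2)) * (1 - t ^ 2) ^ (p + 1) with hv
  have hderiv : ∀ x : ℝ, HasDerivAt v (x * (1 - x ^ 2) ^ p) x := by
    intro x
    have h1 : HasDerivAt (fun t : ℝ => 1 - t ^ 2) (-(2 * x ^ 1)) x :=
      (hasDerivAt_pow 2 x).const_sub 1
    have h2 : HasDerivAt (fun y : ℝ => y ^ (p + 1)) ((p + 1) * (1 - x ^ 2) ^ (p + 1 - 1)) (1 - x ^ 2) :=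
      Real.hasDerivAt_rpow_const (Or.inr (by linarith))
    have h3 := (h2.comp x h1).const_mul (-(1 / (2 * p + 2)))
    have he : p + 1 - 1 = p := by ring
    rw [he] at h3
    have e : x * (1 - x ^ 2) ^ p = -(1 / (2 * p + 2)) * ((p + 1) * (1 - x ^ 2) ^ p * -(2 * x ^ 1)) := by
      have hq : (p + 1) * 2 / (2 * p + 2) = 1 := by rw [div_eq_one_iff_eq hne]; ring
      linear_combination (-(x * (1 - x ^ 2) ^ p)) * hq
    rw [e]
    exact h3
  have key := integral_mul_deriv_eq_deriv_mul (a := (-1:ℝ)) (b := 1)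
    (u := fun t => t) (v := v) (u' := fun _ => (1:ℝ)) (v' := fun t => t * (1 - t ^ 2) ^ p)
    (fun x _ => hasDerivAt_id x) (fun x _ => hderiv x)
    (intervalIntegrable_const)
    ((continuous_id.mul (contW hp0)).intervalIntegrable _ _)
  have hb : v 1 = 0 := by
    simp only [hv, show (1:ℝ) - (1:ℝ) ^ 2 = 0 by norm_num, Real.zero_rpow hp1.ne', mul_zero]
  have hb' : v (-1) = 0 := by
    simp only [hv, show (1:ℝ) - (-1:ℝ) ^ 2 = 0 by norm_num, Real.zero_rpow hp1.ne', mul_zero]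
  rw [hb, hb'] at key
  have h4 : ∀ t : ℝ, t * (t * (1 - t ^ 2) ^ p) = t ^ 2 * (1 - t ^ 2) ^ p := fun t => by ring
  simp_rw [h4] at key
  rw [key]
  simp only [hv, one_mul]
  rw [intervalIntegral.integral_const_mul]
  ring

lemma Wrec {p : ℝ} (hp : (1:ℝ)/2 ≤ p) :
    ∫ t in (-1:ℝ)..1, (1 - t ^ 2) ^ (p + 1)
      = (2 * p + 2) / (2 * p + 3) * ∫ t in (-1:ℝ)..1, (1 - t ^ 2) ^ p := by
  have hp0 : (0:ℝ) < p := by linarith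
  have hp1 : (0:ℝ) < p + 1 := by linarith
  have hsplit : ∫ t in (-1:ℝ)..1, (1 - t ^ 2) ^ (p + 1)
      = (∫ t in (-1:ℝ)..1, (1 - t ^ 2) ^ p) - ∫ t in (-1:ℝ)..1, t ^ 2 * (1 - t ^ 2) ^ p := by
    rw [← intervalIntegral.integral_sub (f := fun t => (1 - t ^ 2) ^ p) (g := fun t => t ^ 2 * (1 - t ^ 2) ^ p) ((contW hp0).intervalIntegrable _ _)
      (((continuous_pow 2).mul (contW hp0)).intervalIntegrable _ _)]
    apply intervalIntegral.integral_congr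
    intro t ht
    rw [Set.uIcc_of_le (by norm_num : (-1:ℝ) ≤ 1)] at ht
    have h1 : (0:ℝ) ≤ 1 - t ^ 2 := by nlinarith [ht.1, ht.2]
    show (1 - t ^ 2) ^ (p + 1) = (1 - t ^ 2) ^ p - t ^ 2 * (1 - t ^ 2) ^ p
    rcases eq_or_lt_of_le h1 with h | h
    · rw [← h, Real.zero_rpow (ne_of_gt hp1), Real.zero_rpow (ne_of_gt hp0)]
      ring
    · rw [Real.rpow_add_one (ne_of_gt h)]
      ring
  have hM := Mval hp
  have hne : (2:ℝ) * p + 2 ≠ 0 := by linarith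
  set B := ∫ t in (-1:ℝ)..1, (1 - t ^ 2) ^ (p + 1)
  set A := ∫ t in (-1:ℝ)..1, (1 - t ^ 2) ^ p
  rw [hM] at hsplit
  field_simp at hsplit ⊢
  linarith

lemma Wval (n : ℕ) :
    ∫ t in (-1:ℝ)..1, (1 - t ^ 2) ^ ((n:ℝ) + 1/2)
      = Real.sqrt π * Real.Gamma ((n:ℝ) + 1 + 1/2) / (Nat.factorial (n+1)) := by
  induction n with
  | zero =>
    have hbase : ∫ t in (-1:ℝ)..1, (1 - t ^ 2) ^ (((0:ℕ):ℝ) + 1/2) = π / 2 := by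
      rw [← integral_sqrt_one_sub_sq]
      apply intervalIntegral.integral_congr
      intro t ht
      show (1 - t ^ 2) ^ (((0:ℕ):ℝ) + 1/2) = √(1 - t ^ 2)
      rw [Real.sqrt_eq_rpow]
      norm_num
    rw [hbase]
    have hΓ : Real.Gamma (((0:ℕ):ℝ) + 1 + 1/2) = Real.sqrt π / 2 := by
      rw [show ((0:ℕ):ℝ) + 1 + 1/2 = 1/2 + 1 by norm_num, Real.Gamma_add_one (by norm_num),
        Real.Gamma_one_half_eq]
      ring
    rw [hΓ]
    have hs : Real.sqrt π * Real.sqrt π = π := Real.mul_self_sqrt Real.pi_pos.le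
    simp [Nat.factorial]
    linarith
  | succ n ih =>
    have hn0 : (0:ℝ) ≤ (n:ℝ) := Nat.cast_nonneg n
    have hcast : (((n+1:ℕ)):ℝ) + 1/2 = ((n:ℝ) + 1/2) + 1 := by push_cast; ring
    rw [hcast, Wrec (by linarith), ih]
    have hΓ : Real.Gamma (((n+1:ℕ):ℝ) + 1 + 1/2)
        = ((n:ℝ) + 1 + 1/2) * Real.Gamma ((n:ℝ) + 1 + 1/2) := by
      rw [show (((n+1:ℕ)):ℝ) + 1 + 1/2 = ((n:ℝ) + 1 + 1/2) + 1 by push_cast; ring,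
        Real.Gamma_add_one (by positivity)]
    rw [hΓ]
    have hfac : (Nat.factorial (n+1+1) : ℝ) = ((n:ℝ)+2) * Nat.factorial (n+1) := by
      rw [Nat.factorial_succ]; push_cast; ring
    rw [hfac]
    have h1 : (Nat.factorial (n+1) : ℝ) ≠ 0 := by positivity
    have h2 : (2:ℝ) * ((n:ℝ)+1/2) + 3 ≠ 0 := by linarith
    have h3 : (n:ℝ) + 2 ≠ 0 := by linarith
    field_simp
    ring

theorem bessel_deriv_two_sided_bound (n : ℕ) (r : ℝ) (hr : r ∈ Set.Ioo (0 : ℝ) 1) :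
    0 < r ^ n / (2 ^ (n + 2) * Nat.factorial n) ∧
      r ^ n / (2 ^ (n + 2) * Nat.factorial n) ≤ deriv (besselJ (n + 1)) r ∧
      deriv (besselJ (n + 1)) r ≤ r ^ n / (2 ^ (n + 1) * Nat.factorial n) := by
  obtain ⟨hr0, hr1⟩ := hr
  have hn0 : (0:ℝ) ≤ (n:ℝ) := Nat.cast_nonneg n
  set p : ℝ := (n:ℝ) + 1/2 with hpdef
  have hp0 : (0:ℝ) < p := by rw [hpdef]; linarith
  have hphalf : (1:ℝ)/2 ≤ p := by rw [hpdef]; linarith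
  have hwc : Continuous (fun t : ℝ => (1 - t ^ 2) ^ p) := contW hp0
  have hw0 : ∀ t : ℝ, t ∈ Set.Icc (-1:ℝ) 1 → 0 ≤ (1 - t ^ 2) ^ p := fun t ht =>
    Real.rpow_nonneg (by nlinarith [ht.1, ht.2]) p
  have hw1 : ∀ t : ℝ, t ∈ Set.Icc (-1:ℝ) 1 → (1 - t ^ 2) ^ p ≤ 1 := fun t ht =>
    Real.rpow_le_one (by nlinarith [ht.1, ht.2]) (by nlinarith [ht.1, ht.2]) hp0.le
  set I : ℝ → ℝ := fun x => ∫ t in (-1:ℝ)..1, Real.cos (x * t) * (1 - t ^ 2) ^ p with hIdef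
  set D : ℝ := 2 ^ (n+1) * Real.Gamma (((n+1:ℕ):ℝ) + 1/2) * Real.sqrt π with hDdef
  have hcast1 : ((n+1:ℕ):ℝ) - 1/2 = p := by rw [hpdef]; push_cast; ring
  have hbJ : besselJ (n+1) = fun x => (x ^ (n+1) * I x) / D := by
    funext x
    simp only [besselJ, hcast1, hIdef, hDdef]
    ring
  -- continuity of integrands
  have hJmeas : ∀ x : ℝ, Continuous (fun t : ℝ => Real.cos (x * t) * (1 - t ^ 2) ^ p) := fun x =>
    (Real.continuous_cos.comp (continuous_const.mul continuous_id)).mul hwc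
  have hF'cont : ∀ x : ℝ, Continuous (fun t : ℝ => -(t * Real.sin (x * t)) * (1 - t ^ 2) ^ p) :=
    fun x => ((continuous_id.mul (Real.continuous_sin.comp (continuous_const.mul continuous_id))).neg).mul hwc
  -- derivative of I
  have hId : HasDerivAt I (∫ t in (-1:ℝ)..1, -(t * Real.sin (r * t)) * (1 - t ^ 2) ^ p) r := by
    rw [hIdef]
    have H := intervalIntegral.hasDerivAt_integral_of_dominated_loc_of_deriv_le
      (μ := volume) (F := fun x t => Real.cos (x * t) * (1 - t ^ 2) ^ p)
      (F' := fun x t => -(t * Real.sin (x * t)) * (1 - t ^ 2) ^ p)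
      (x₀ := r) (a := -1) (b := 1) (bound := fun _ => 1) (s := Metric.ball r 1) (Metric.ball_mem_nhds r one_pos)
      (Filter.Eventually.of_forall fun x => ((hJmeas x).aestronglyMeasurable))
      (((hJmeas r)).intervalIntegrable _ _)
      ((hF'cont r).aestronglyMeasurable)
      ?_ intervalIntegrable_const ?_
    · exact H.2
    · refine Filter.Eventually.of_forall fun t ht x _ => ?_
      have ht' : t ∈ Set.Icc (-1:ℝ) 1 := by
        rw [Set.uIoc_of_le (by norm_num : (-1:ℝ) ≤ 1)] at ht
        exact ⟨ht.1.le, ht.2⟩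
      have h1 : |t| ≤ 1 := abs_le.mpr ⟨ht'.1, ht'.2⟩
      have h2 : |Real.sin (x * t)| ≤ 1 := abs_le.mpr ⟨Real.neg_one_le_sin _, Real.sin_le_one _⟩
      have hw0' := hw0 t ht'
      have hw1' := hw1 t ht'
      rw [Real.norm_eq_abs, abs_mul, abs_neg, abs_mul, abs_of_nonneg hw0']
      exact mul_le_one₀ (mul_le_one₀ h1 (abs_nonneg _) h2) hw0' hw1'
    · refine Filter.Eventually.of_forall fun t _ x _ => ?_
      have h := ((Real.hasDerivAt_cos (x * t)).comp x (hasDerivAt_mul_const t)).mul_const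
        ((1 - t ^ 2) ^ p)
      rw [show -(t * Real.sin (x * t)) * (1 - t ^ 2) ^ p = -Real.sin (x * t) * t * (1 - t ^ 2) ^ p by ring]
      exact h
  set J' : ℝ := ∫ t in (-1:ℝ)..1, -(t * Real.sin (r * t)) * (1 - t ^ 2) ^ p with hJ'def
  have hpow : HasDerivAt (fun x : ℝ => x ^ (n+1)) (((n:ℝ)+1) * r ^ n) r := by
    have := hasDerivAt_pow (n+1) r
    simpa using this
  have hDer : HasDerivAt (besselJ (n+1)) ((((n:ℝ)+1) * r ^ n * I r + r ^ (n+1) * J') / D) r := by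
    rw [hbJ]
    exact (hpow.mul hId).div_const D
  have hderiv : deriv (besselJ (n+1)) r = (((n:ℝ)+1) * r ^ n * I r + r ^ (n+1) * J') / D :=
    hDer.deriv
  -- combine into S
  set S : ℝ := ∫ t in (-1:ℝ)..1,
      (((n:ℝ)+1) * Real.cos (r * t) - (r * t) * Real.sin (r * t)) * (1 - t ^ 2) ^ p with hSdef
  have hScont : Continuous (fun t : ℝ =>
      (((n:ℝ)+1) * Real.cos (r * t) - (r * t) * Real.sin (r * t)) * (1 - t ^ 2) ^ p) :=
    (((continuous_const.mul (Real.continuous_cos.comp (continuous_const.mul continuous_id))).sub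
      ((continuous_const.mul continuous_id).mul
        (Real.continuous_sin.comp (continuous_const.mul continuous_id)))).mul hwc)
  have hSsplit : S = ((n:ℝ)+1) * I r + r * J' := by
    rw [hSdef]
    simp only [hIdef, hJ'def]
    rw [← intervalIntegral.integral_const_mul, ← intervalIntegral.integral_const_mul,
      ← intervalIntegral.integral_add (f := fun t => ((n:ℝ)+1) * (Real.cos (r * t) * (1 - t ^ 2) ^ p))
        (g := fun t => r * (-(t * Real.sin (r * t)) * (1 - t ^ 2) ^ p)) ((continuous_const.mul (hJmeas r)).intervalIntegrable _ _)
        ((continuous_const.mul (hF'cont r)).intervalIntegrable _ _)]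
    apply intervalIntegral.integral_congr
    intro t _
    dsimp
    ring
  have hnum : (((n:ℝ)+1) * r ^ n * I r + r ^ (n+1) * J') = r ^ n * S := by
    rw [hSsplit, pow_succ]
    ring
  rw [hnum] at hderiv
  -- W and its value
  set W : ℝ := ∫ t in (-1:ℝ)..1, (1 - t ^ 2) ^ p with hWdef
  have hWnonneg : 0 ≤ W := by
    rw [hWdef]
    exact intervalIntegral.integral_nonneg (by norm_num) (fun t ht => hw0 t ht)
  -- sign facts
  have hsin_sign : ∀ x : ℝ, |x| ≤ 1 → 0 ≤ x * Real.sin x := by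
    intro x hx
    rcases le_or_gt 0 x with h | h
    · have hx2 : x ≤ π := by nlinarith [Real.pi_gt_three, (abs_le.mp hx).2]
      exact mul_nonneg h (Real.sin_nonneg_of_nonneg_of_le_pi h hx2)
    · have h1 : (0:ℝ) ≤ -x := by linarith
      have h2 : -x ≤ π := by nlinarith [Real.pi_gt_three, (abs_le.mp hx).1]
      have h3 := mul_nonneg h1 (Real.sin_nonneg_of_nonneg_of_le_pi h1 h2)
      rw [Real.sin_neg] at h3
      nlinarith [h3]
  have hsin_sq : ∀ x : ℝ, x * Real.sin x ≤ x ^ 2 := by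
    intro x
    calc x * Real.sin x ≤ |x * Real.sin x| := le_abs_self _
      _ = |x| * |Real.sin x| := abs_mul _ _
      _ ≤ |x| * |x| := mul_le_mul_of_nonneg_left Real.abs_sin_le_abs (abs_nonneg x)
      _ = x ^ 2 := by rw [abs_mul_abs_self]; ring
  have habs : ∀ t : ℝ, t ∈ Set.Icc (-1:ℝ) 1 → |r * t| ≤ 1 := by
    intro t ht
    rw [abs_mul, abs_of_pos hr0]
    exact mul_le_one₀ hr1.le (abs_nonneg t) (abs_le.mpr ⟨ht.1, ht.2⟩)
  -- upper bound on S
  have hSupper : S ≤ ((n:ℝ)+1) * W := by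
    have h : S ≤ ∫ t in (-1:ℝ)..1, ((n:ℝ)+1) * (1 - t ^ 2) ^ p := by
      rw [hSdef]
      apply intervalIntegral.integral_mono_on (by norm_num)
        (hScont.intervalIntegrable _ _) ((continuous_const.mul hwc).intervalIntegrable _ _)
      intro t ht
      have hw0' := hw0 t ht
      simp only [Pi.mul_apply, Pi.sub_apply]
      have hsign := hsin_sign (r * t) (habs t ht)
      have hcos : Real.cos (r * t) ≤ 1 := Real.cos_le_one _
      have hg : (((n:ℝ)+1) * Real.cos (r * t) - (r * t) * Real.sin (r * t)) ≤ (n:ℝ)+1 := by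
        nlinarith
      nlinarith [mul_le_mul_of_nonneg_right hg hw0']
    rwa [intervalIntegral.integral_const_mul, ← hWdef] at h
  -- lower bound on S
  have hSlower : ((n:ℝ)+1)/2 * W ≤ S := by
    have h1 : (∫ t in (-1:ℝ)..1, (((n:ℝ)+1) * (1 - t ^ 2) ^ p
        - (((n:ℝ)+3)/2 * r^2) * (t ^ 2 * (1 - t ^ 2) ^ p))) ≤ S := by
      rw [hSdef]
      apply intervalIntegral.integral_mono_on (by norm_num)
        (((continuous_const.mul hwc).sub (continuous_const.mul ((continuous_pow 2).mul hwc))).intervalIntegrable _ _)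
        (hScont.intervalIntegrable _ _)
      intro t ht
      have hw0' := hw0 t ht
      simp only [Pi.mul_apply, Pi.sub_apply]
      have hcos := Real.one_sub_sq_div_two_le_cos (x := r * t)
      have hss := hsin_sq (r * t)
      have hg : ((n:ℝ)+1) - ((n:ℝ)+3)/2 * (r*t)^2
          ≤ ((n:ℝ)+1) * Real.cos (r*t) - (r*t) * Real.sin (r*t) := by nlinarith
      nlinarith [mul_le_mul_of_nonneg_right hg hw0']
    have h2 : (∫ t in (-1:ℝ)..1, (((n:ℝ)+1) * (1 - t ^ 2) ^ p
        - (((n:ℝ)+3)/2 * r^2) * (t ^ 2 * (1 - t ^ 2) ^ p)))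
        = ((n:ℝ)+1) * W - (((n:ℝ)+3)/2 * r^2) * (W / (2*p+3)) := by
      rw [intervalIntegral.integral_sub (f := fun t => ((n:ℝ)+1) * (1 - t ^ 2) ^ p)
          (g := fun t => (((n:ℝ)+3)/2 * r^2) * (t ^ 2 * (1 - t ^ 2) ^ p)) ((continuous_const.mul hwc).intervalIntegrable _ _)
          ((continuous_const.mul ((continuous_pow 2).mul hwc)).intervalIntegrable _ _),
        intervalIntegral.integral_const_mul, intervalIntegral.integral_const_mul,
        Mval hphalf, Wrec hphalf, ← hWdef]
      congr 1
      have hne1 : (2:ℝ)*p+2 ≠ 0 := by linarith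
      have hne2 : (2:ℝ)*p+3 ≠ 0 := by linarith
      field_simp
    rw [h2] at h1
    set u : ℝ := W / (2*p+3) with hudef
    have hu0 : 0 ≤ u := div_nonneg hWnonneg (by linarith)
    have hWeq : W = u * (2*p+3) := by
      rw [hudef, div_mul_cancel₀ _ (by linarith : (2:ℝ)*p+3 ≠ 0)]
    have hr2 : r^2 ≤ 1 := by nlinarith
    rw [hpdef] at hWeq
    nlinarith [h1, mul_nonneg hu0 (sub_nonneg.mpr hr2),
      mul_nonneg (mul_nonneg hn0 hu0) (sub_nonneg.mpr hr2),
      mul_nonneg (mul_nonneg hn0 hn0) hu0, mul_nonneg hn0 hu0, hWeq]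
  -- value of W and positivity of D
  have hgampos : 0 < Real.Gamma (((n+1:ℕ):ℝ) + 1/2) := Real.Gamma_pos_of_pos (by positivity)
  have hsq : (0:ℝ) < Real.sqrt π := Real.sqrt_pos.mpr Real.pi_pos
  have hDpos : 0 < D := by
    rw [hDdef]
    exact mul_pos (mul_pos (by positivity) hgampos) hsq
  have hWval : W = Real.sqrt π * Real.Gamma ((n:ℝ) + 1 + 1/2) / (Nat.factorial (n+1)) := by
    rw [hWdef, hpdef]
    exact Wval n
  have hkey : ((n:ℝ)+1) * W / D = 1 / (2^(n+1) * Nat.factorial n) := by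
    rw [hWval, hDdef]
    have hc : ((n+1:ℕ):ℝ) + 1/2 = (n:ℝ) + 1 + 1/2 := by push_cast; ring
    rw [hc]
    have hfac : (Nat.factorial (n+1) : ℝ) = ((n:ℝ)+1) * Nat.factorial n := by
      rw [Nat.factorial_succ]; push_cast; ring
    rw [hfac]
    have h1 : Real.Gamma ((n:ℝ)+1+1/2) ≠ 0 := ne_of_gt (Real.Gamma_pos_of_pos (by positivity))
    have h2 : (Nat.factorial n : ℝ) ≠ 0 := by positivity
    have h3 : Real.sqrt π ≠ 0 := ne_of_gt hsq
    have h4 : (n:ℝ) + 1 ≠ 0 := by linarith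
    field_simp
  refine ⟨div_pos (pow_pos hr0 n) (by positivity), ?_, ?_⟩
  · -- lower bound
    rw [hderiv]
    have e1 : r ^ n / (2 ^ (n+2) * (Nat.factorial n : ℝ)) = r ^ n * (((n:ℝ)+1)/2 * W) / D := by
      have e2 : r ^ n * (((n:ℝ)+1)/2 * W) / D = r ^ n * (((n:ℝ)+1) * W / D) / 2 := by ring
      rw [e2, hkey]
      have h2 : (Nat.factorial n : ℝ) ≠ 0 := by positivity
      have h3 : (2:ℝ)^(n+2) = 2 * 2^(n+1) := by ring
      rw [h3]
      field_simp
    rw [e1]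
    gcongr
  · -- upper bound
    rw [hderiv]
    have e1 : r ^ n * (((n:ℝ)+1) * W) / D = r ^ n / (2 ^ (n+1) * (Nat.factorial n : ℝ)) := by
      rw [mul_div_assoc, hkey, mul_one_div]
    calc r ^ n * S / D ≤ r ^ n * (((n:ℝ)+1) * W) / D := by
          gcongr
      _ = r ^ n / (2 ^ (n+1) * (Nat.factorial n : ℝ)) := e1
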